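/- Let 𝔸, 𝔹 be order m ≥ 2, dimension n tensors with 𝔹 = D^{-(m-1)} 𝔸 D for an invertible diagonal matrix D (diagonal similarity). Then x ∈ ℂⁿ is an eigenvector of 𝔹 with eigenvalue λ (i.e. 𝔹x = λ x^{[m-1]}) if and only if y = Dx is an eigenvector of 𝔸 with the same eigenvalue λ (i.e. 𝔸y = λ y^{[m-1]}). -/

import Mathlib

open scoped BigOperators

noncomputable section

/-- An "order (1 + |α|)" tensor of dimension `|I|` over `R`: entries indexed by a
head index in `I` and a tail of indices `α → I`. -/
abbrev Tensor (R I α : Type) : Type := I → (α → I) → R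

/-- The general tensor product: `(A*B)_{i α₁ ⋯ α_m} = ∑ a_{i i₂ ⋯} ∏ b_{i_j α_j}`. -/
def tmul {R I α β : Type} [CommSemiring R] [Fintype I] [DecidableEq α] [Fintype α]
    (A : Tensor R I α) (B : Tensor R I β) : Tensor R I (α × β) :=
  fun i f => ∑ t : α → I, A i t * ∏ j : α, B (t j) (fun b => f (j, b))

/-- The general tensor product of a tensor with a vector (an order-1 tensor). -/
def tapp {R I α : Type} [CommSemiring R] [Fintype I] [DecidableEq α] [Fintype α]
    (A : Tensor R I α) (x : I → R) : I → R :=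
  fun i => ∑ t : α → I, A i t * ∏ j : α, x (t j)

/-- The general tensor product `P * A` where `P` is a matrix (an order-2 tensor). -/
def matMulT {R I α : Type} [CommSemiring R] [Fintype I]
    (P : Matrix I I R) (A : Tensor R I α) : Tensor R I α :=
  fun i f => ∑ j : I, P i j * A j f

/-- The general tensor product `A * Q` where `Q` is a matrix (an order-2 tensor). -/
def tMulMat {R I α : Type} [CommSemiring R] [Fintype I] [DecidableEq α] [Fintype α]
    (A : Tensor R I α) (Q : Matrix I I R) : Tensor R I α :=
  fun i f => ∑ t : α → I, A i t * ∏ j : α, Q (t j) (f j)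

/-- The unit tensor `𝕀`: entries `1` exactly on the diagonal. -/
def unitT (R I α : Type) [CommSemiring R] [DecidableEq I] [Fintype α] [DecidableEq α] :
    Tensor R I α :=
  fun i f => if ∀ j, f j = i then 1 else 0

/-- The direct product of two tensors of the same order. -/
def dprod {R I J α : Type} [CommSemiring R]
    (A : Tensor R I α) (B : Tensor R J α) : Tensor R (I × J) α :=
  fun p f => A p.1 (fun j => (f j).1) * B p.2 (fun j => (f j).2)

end

/-- diagonal similarity and eigenvectors. `𝔹 = D^{-((m+1)-1)} 𝔸 D`;
`x` is an eigenvector of `𝔹` for `λ` iff `y = Dx` is one of `𝔸` for `λ`. -/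
theorem diag_similar_eigen (n m : ℕ) (hm : 1 ≤ m) (d : Fin n → ℂ) (hd : ∀ i, d i ≠ 0)
    (A B : Tensor ℂ (Fin n) (Fin m))
    (hB : B = matMulT ((Matrix.diagonal d)⁻¹ ^ m) (tMulMat A (Matrix.diagonal d)))
    (lam : ℂ) (x : Fin n → ℂ) (hx : x ≠ 0) :
    (tapp B x = fun i => lam * x i ^ m) ↔
      (tapp A (fun i => d i * x i) = fun i => lam * (d i * x i) ^ m) := by
  have hinv : (Matrix.diagonal d)⁻¹ = Matrix.diagonal (fun i => (d i)⁻¹) := by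
    apply Matrix.inv_eq_right_inv
    rw [Matrix.diagonal_mul_diagonal]
    have : (fun i => d i * (d i)⁻¹) = fun _ => (1 : ℂ) := by
      funext i; exact mul_inv_cancel₀ (hd i)
    simpa [this] using Matrix.diagonal_one
  have hpow : (Matrix.diagonal d)⁻¹ ^ m = Matrix.diagonal (fun i => (d i)⁻¹ ^ m) := by
    rw [hinv, Matrix.diagonal_pow]
    rfl
  have hBval : ∀ i f, B i f = (d i)⁻¹ ^ m * ((∏ j, d (f j)) * A i f) := by
    intro i f
    rw [hB, matMulT, hpow]
    rw [Finset.sum_eq_single i]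
    · simp only [Matrix.diagonal_apply_eq, tMulMat]
      congr 1
      rw [Finset.sum_eq_single f]
      · simp [mul_comm]
      · intro t _ ht

        obtain ⟨j, hj⟩ : ∃ j, t j ≠ f j := by
          by_contra h
          push_neg at h
          exact ht (funext h)
        rw [Finset.prod_eq_zero (Finset.mem_univ j)]
        · simp
        · simp [Matrix.diagonal_apply_ne _ hj]
      · intro h
        exact absurd (Finset.mem_univ f) h
    · intro j _ hj
      simp [Matrix.diagonal_apply_ne' _ hj]
    · intro h
      exact absurd (Finset.mem_univ i) h
  have hBapp : ∀ i, tapp B x i = (d i)⁻¹ ^ m * tapp A (fun i => d i * x i) i := by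
    intro i
    simp only [tapp, hBval, Finset.mul_sum]
    congr 1
    ext t
    rw [mul_assoc, mul_assoc, mul_comm (∏ j, d (t j)), mul_assoc, ← Finset.prod_mul_distrib]
    simp [mul_comm]
  constructor
  · intro h
    funext i
    have hi := congrFun h i
    rw [hBapp] at hi
    have hdm : (d i) ^ m ≠ 0 := pow_ne_zero _ (hd i)
    field_simp at hi
    rw [mul_pow, mul_left_comm, ← hi, ← mul_assoc, ← mul_pow, mul_one_div_cancel (hd i)]
    ring
  · intro h
    funext i
    rw [hBapp, congrFun h i]
    have hdm : (d i) ^ m ≠ 0 := pow_ne_zero _ (hd i)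
    field_simp
    rw [show (1 / d i) ^ m * lam * (d i * x i) ^ m = (d i * (1 / d i)) ^ m * lam * x i ^ m by ring,
      mul_one_div_cancel (hd i), one_pow]
    ring
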